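/- Let J be a real n×n matrix. Then every complex eigenvalue of J has strictly negative real part if and only if for every v ∈ ℝⁿ the trajectory exp(tJ)·v converges to 0 as t → ∞. -/

import Mathlib

open NormedSpace Filter Matrix Module
open scoped Nat Topology

namespace StabilityAux

/-- Polynomial times decaying exponential tends to zero. -/
lemma tendsto_pow_mul_exp_zero (j : ℕ) {c : ℝ} (hc : c < 0) :
    Tendsto (fun t : ℝ => t ^ j * Real.exp (c * t)) atTop (𝓝 0) := by
  have h1 : Tendsto (fun t : ℝ => (-c) * t) atTop atTop :=
    Tendsto.const_mul_atTop (by linarith) tendsto_id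
  have h2 := (Real.tendsto_pow_mul_exp_neg_atTop_nhds_zero j).comp h1
  have h3 : Tendsto (fun t : ℝ => ((-c) * t) ^ j * Real.exp (c * t)) atTop (𝓝 0) := by
    refine h2.congr fun t => ?_
    simp only [Function.comp_apply]
    ring_nf
  have h4 := h3.const_mul (((-c) ^ j)⁻¹)
  rw [mul_zero] at h4
  refine h4.congr fun t => ?_
  have hcj : ((-c) ^ j) ≠ 0 := pow_ne_zero _ (by linarith)
  field_simp
  ring

section Complex

variable {n : ℕ}

attribute [local instance] Matrix.linftyOpNormedRing Matrix.linftyOpNormedAlgebra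
  Matrix.linftyOpNormedSpace

lemma continuous_mulVec (w : Fin n → ℂ) :
    Continuous (fun M : Matrix (Fin n) (Fin n) ℂ => M *ᵥ w) := by
  refine continuous_pi fun i => ?_
  simp only [Matrix.mulVec, dotProduct]
  exact continuous_finset_sum _ fun j _ =>
    (continuous_apply_apply i j).mul continuous_const

lemma exp_mulVec_eq (A : Matrix (Fin n) (Fin n) ℂ) (w : Fin n → ℂ) :
    exp A *ᵥ w = ∑' j : ℕ, (j !⁻¹ : ℂ) • (A ^ j *ᵥ w) := by
  have hsum := expSeries_summable' (𝕂 := ℂ) A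
  have hmap := (hsum.hasSum.map
    (AddMonoidHom.mk' (fun M : Matrix (Fin n) (Fin n) ℂ => M *ᵥ w)
      (fun M N => Matrix.add_mulVec M N w)) (continuous_mulVec w)).tsum_eq
  simp only [AddMonoidHom.mk'_apply] at hmap
  rw [exp_eq_tsum ℂ]
  beta_reduce
  erw [← hmap]
  exact tsum_congr fun j => (smul_mulVec _ _ _)

lemma exp_mulVec_eigen {A : Matrix (Fin n) (Fin n) ℂ} {w : Fin n → ℂ} {μ : ℂ}
    (hw : A *ᵥ w = μ • w) :
    exp A *ᵥ w = Complex.exp μ • w := by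
  have hp : ∀ j : ℕ, A ^ j *ᵥ w = μ ^ j • w := by
    intro j
    induction j with
    | zero => simp
    | succ j ih =>
      rw [pow_succ', ← Matrix.mulVec_mulVec, ih, Matrix.mulVec_smul, hw, smul_smul]
      rw [← pow_succ]
  rw [exp_mulVec_eq]
  have : ∀ j : ℕ, (j !⁻¹ : ℂ) • (A ^ j *ᵥ w) = ((j !⁻¹ : ℂ) * μ ^ j) • w := by
    intro j; rw [hp j, smul_smul]
  simp_rw [this]
  rw [Summable.tsum_smul_const]
  · congr 1
    rw [Complex.exp_eq_exp_ℂ, exp_eq_tsum ℂ]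
    exact tsum_congr fun j => by rw [smul_eq_mul]
  · have := expSeries_summable' (𝕂 := ℂ) (𝔸 := ℂ) μ
    simpa [smul_eq_mul] using this

lemma exp_mulVec_genEigen (A : Matrix (Fin n) (Fin n) ℂ) (μ : ℂ) (w : Fin n → ℂ) (k : ℕ)
    (hk : ((A - μ • 1) ^ k) *ᵥ w = 0) (z : ℂ) :
    exp (z • A) *ᵥ w =
      ∑ j ∈ Finset.range k,
        (Complex.exp (z * μ) * z ^ j * (j !⁻¹ : ℂ)) • (((A - μ • 1) ^ j) *ᵥ w) := by
  set N := A - μ • (1 : Matrix (Fin n) (Fin n) ℂ) with hN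
  have hzA : z • A = (z * μ) • (1 : Matrix (Fin n) (Fin n) ℂ) + z • N := by
    rw [hN, smul_sub, smul_smul]
    abel
  have hcomm : Commute ((z * μ) • (1 : Matrix (Fin n) (Fin n) ℂ)) (z • N) :=
    ((Commute.one_left N).smul_left _).smul_right _
  rw [hzA, Matrix.exp_add_of_commute _ _ hcomm]
  have h1 : exp ((z * μ) • (1 : Matrix (Fin n) (Fin n) ℂ)) =
      Complex.exp (z * μ) • (1 : Matrix (Fin n) (Fin n) ℂ) := by
    erw [← Algebra.algebraMap_eq_smul_one, ← map_exp (algebraMap ℂ (Matrix (Fin n) (Fin n) ℂ))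
      (continuous_algebraMap _ _), ← Complex.exp_eq_exp_ℂ, Algebra.algebraMap_eq_smul_one]
  rw [h1, smul_mul_assoc, one_mul, smul_mulVec, exp_mulVec_eq]
  have hzero : ∀ j ∉ Finset.range k, (j !⁻¹ : ℂ) • ((z • N) ^ j *ᵥ w) = 0 := by
    intro j hj
    rw [Finset.mem_range, not_lt] at hj
    have hNj : N ^ j *ᵥ w = 0 := by
      have : N ^ j = N ^ (j - k) * N ^ k := by rw [← pow_add]; congr 1; omega
      rw [this, ← Matrix.mulVec_mulVec, hk, Matrix.mulVec_zero]
    rw [smul_pow, smul_mulVec, hNj, smul_zero, smul_zero]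
  rw [tsum_eq_sum hzero, Finset.smul_sum]
  refine Finset.sum_congr rfl fun j hj => ?_
  rw [smul_pow, smul_mulVec, smul_smul, smul_smul]
  congr 1
  ring

/-- Core of the forward direction: if every eigenvalue has negative real part,
every complex trajectory tends to zero. -/
lemma forward_aux (A : Matrix (Fin n) (Fin n) ℂ)
    (h : ∀ μ ∈ spectrum ℂ A, μ.re < 0) (w : Fin n → ℂ) :
    Tendsto (fun t : ℝ => exp ((t : ℂ) • A) *ᵥ w) atTop (𝓝 0) := by
  let S : Submodule ℂ (Fin n → ℂ) :=
    { carrier := {w | Tendsto (fun t : ℝ => exp ((t : ℂ) • A) *ᵥ w) atTop (𝓝 0)}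
      add_mem' := fun {x y} hx hy => by
        have := hx.add hy
        rw [add_zero] at this
        refine this.congr fun t => ?_
        rw [← Matrix.mulVec_add]
      zero_mem' := by
        simpa using tendsto_const_nhds.congr fun t : ℝ =>
          (Matrix.mulVec_zero (exp ((t : ℂ) • A))).symm
      smul_mem' := fun c x hx => by
        have := hx.const_smul c
        rw [smul_zero] at this
        refine this.congr fun t => ?_
        rw [← Matrix.mulVec_smul] }
  suffices hS : w ∈ S from hS
  set L : Module.End ℂ (Fin n → ℂ) := Matrix.toLinAlgEquiv' A with hL
  have htop := Module.End.iSup_maxGenEigenspace_eq_top L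
  have hle : (⊤ : Submodule ℂ (Fin n → ℂ)) ≤ S := by
    rw [← htop]
    refine iSup_le fun μ => ?_
    intro x hx
    obtain ⟨k, hk⟩ := (Module.End.mem_maxGenEigenspace _ _ _).mp hx
    by_cases hx0 : x = 0
    · subst hx0; exact Submodule.zero_mem S
    -- μ is an eigenvalue, hence in the spectrum
    have hμspec : μ ∈ spectrum ℂ A := by
      have hgen : Module.End.HasGenEigenvalue L μ k := by
        rw [Module.End.hasGenEigenvalue_iff]
        intro hbot
        refine hx0 ?_
        have hxmem : x ∈ L.genEigenspace μ (k : ℕ∞) :=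
          Module.End.mem_genEigenspace_nat.mpr hk
        rw [hbot] at hxmem
        simpa using hxmem
      have hev := Module.End.hasEigenvalue_of_hasGenEigenvalue hgen
      have hmem := Module.End.hasEigenvalue_iff_mem_spectrum.mp hev
      rwa [hL, AlgEquiv.spectrum_eq Matrix.toLinAlgEquiv' A] at hmem
    have hμ := h μ hμspec
    -- translate hk to matrix form
    have hkm : ((A - μ • 1) ^ k) *ᵥ x = 0 := by
      have h2 : (Matrix.toLinAlgEquiv' ((A - μ • 1) ^ k)) x = 0 := by
        rw [map_pow, map_sub, _root_.map_smul, _root_.map_one]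
        exact hk
      rwa [Matrix.toLinAlgEquiv'_apply] at h2
    -- decompose and estimate
    show Tendsto (fun t : ℝ => exp ((t : ℂ) • A) *ᵥ x) atTop (𝓝 0)
    have hdecomp := fun t : ℝ => exp_mulVec_genEigen A μ x k hkm (t : ℂ)
    simp only [hdecomp]
    rw [show (0 : Fin n → ℂ) = ∑ j ∈ Finset.range k, (0 : Fin n → ℂ) by simp]
    refine tendsto_finset_sum _ fun j _ => ?_
    have hscalar : Tendsto
        (fun t : ℝ => Complex.exp ((t : ℂ) * μ) * (t : ℂ) ^ j * (j !⁻¹ : ℂ)) atTop (𝓝 0) := by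
      rw [tendsto_zero_iff_norm_tendsto_zero]
      have heq : ∀ᶠ t : ℝ in atTop,
          ‖Complex.exp ((t : ℂ) * μ) * (t : ℂ) ^ j * (j !⁻¹ : ℂ)‖ =
            (j !⁻¹ : ℝ) * (t ^ j * Real.exp (μ.re * t)) := by
        filter_upwards [eventually_ge_atTop (0 : ℝ)] with t ht
        rw [norm_mul, norm_mul, Complex.norm_exp]
        simp only [norm_pow, Complex.norm_real, Real.norm_eq_abs, abs_of_nonneg ht]
        have : ((t : ℂ) * μ).re = μ.re * t := by
          simp [Complex.mul_re, mul_comm]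
        rw [this, norm_inv, Complex.norm_natCast]
        ring
      rw [tendsto_congr' heq]
      have := (tendsto_pow_mul_exp_zero j hμ).const_mul ((j !⁻¹ : ℝ))
      rwa [mul_zero] at this
    have := hscalar.smul_const (((A - μ • 1) ^ j) *ᵥ x)
    rwa [zero_smul] at this
  exact hle trivial

lemma exp_map_ofReal (J : Matrix (Fin n) (Fin n) ℝ) (t : ℝ) :
    (exp (t • J)).map (Complex.ofReal : ℝ → ℂ) =
      exp ((t : ℂ) • J.map (Complex.ofReal : ℝ → ℂ)) := by
  have hcont : Continuous (Complex.ofRealHom.mapMatrix :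
      Matrix (Fin n) (Fin n) ℝ →+* Matrix (Fin n) (Fin n) ℂ) := by
    have : Continuous fun M : Matrix (Fin n) (Fin n) ℝ => M.map (Complex.ofReal : ℝ → ℂ) :=
      Continuous.matrix_map continuous_id Complex.continuous_ofReal
    exact this
  have h1 := map_exp (Complex.ofRealHom.mapMatrix :
      Matrix (Fin n) (Fin n) ℝ →+* Matrix (Fin n) (Fin n) ℂ) hcont (t • J)
  have h2 : (Complex.ofRealHom.mapMatrix :
      Matrix (Fin n) (Fin n) ℝ →+* Matrix (Fin n) (Fin n) ℂ) (t • J) =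
      (t : ℂ) • J.map (Complex.ofReal : ℝ → ℂ) := by
    ext i j
    simp [RingHom.mapMatrix_apply, Matrix.map_apply]
  have h3 : (Complex.ofRealHom.mapMatrix :
      Matrix (Fin n) (Fin n) ℝ →+* Matrix (Fin n) (Fin n) ℂ) (exp (t • J)) =
      (exp (t • J)).map (Complex.ofReal : ℝ → ℂ) := by
    ext i j
    simp [RingHom.mapMatrix_apply, Matrix.map_apply]
  rw [← h3, ← h2]
  exact h1

end Complex

end StabilityAux

open StabilityAux

/-- Every complex eigenvalue of the real matrix `J` has strictly negative real part
iff every trajectory `t ↦ exp (t J) ⬝ v` of the linear system converges to `0` as `t → ∞`. -/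
theorem eigenvalues_re_neg_iff_forall_tendsto_zero {n : ℕ} (J : Matrix (Fin n) (Fin n) ℝ) :
    (∀ μ ∈ spectrum ℂ (J.map (Complex.ofReal : ℝ → ℂ)), μ.re < 0) ↔
      ∀ v : EuclideanSpace ℝ (Fin n),
        Filter.Tendsto (fun t : ℝ => Matrix.toEuclideanLin (NormedSpace.exp (t • J)) v)
          Filter.atTop (nhds 0) := by
  constructor
  · intro h v
    set v' : Fin n → ℝ := WithLp.equiv 2 (Fin n → ℝ) v with hv'
    set w : Fin n → ℂ := fun j => (v' j : ℂ) with hwdef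
    have key := forward_aux (J.map (Complex.ofReal : ℝ → ℂ)) h w
    have hrepr : ∀ t : ℝ, Matrix.toEuclideanLin (exp (t • J)) v =
        (WithLp.equiv 2 (Fin n → ℝ)).symm (exp (t • J) *ᵥ v') :=
      fun t => Matrix.toEuclideanLin_apply _ v
    simp only [hrepr]
    rw [show (0 : EuclideanSpace ℝ (Fin n)) = (WithLp.equiv 2 (Fin n → ℝ)).symm 0 by simp]
    refine Tendsto.comp ((PiLp.continuous_toLp 2 (fun _ : Fin n => ℝ)).tendsto 0) ?_
    rw [tendsto_pi_nhds]
    intro i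
    rw [tendsto_pi_nhds] at key
    have hci := (Complex.continuous_re.tendsto 0).comp (key i)
    rw [Complex.zero_re] at hci
    have hentry : ∀ t : ℝ,
        ((exp ((t : ℂ) • J.map (Complex.ofReal : ℝ → ℂ)) *ᵥ w) i) =
          ((exp (t • J) *ᵥ v') i : ℂ) := by
      intro t
      rw [← exp_map_ofReal]
      simp only [Matrix.mulVec, dotProduct, Matrix.map_apply, hwdef]
      push_cast
      rfl
    have : ∀ t : ℝ, (exp (t • J) *ᵥ v') i =
        ((exp ((t : ℂ) • J.map (Complex.ofReal : ℝ → ℂ)) *ᵥ w) i).re := by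
      intro t; rw [hentry t, Complex.ofReal_re]
    simp only [Pi.zero_apply] at *
    exact hci.congr fun t => (this t).symm
  · intro H μ hμ
    by_contra hre
    push_neg at hre
    set Ac : Matrix (Fin n) (Fin n) ℂ := J.map (Complex.ofReal : ℝ → ℂ) with hAc
    have hnu : ¬IsUnit (algebraMap ℂ (Matrix (Fin n) (Fin n) ℂ) μ - Ac) := hμ
    have hdet0 : (algebraMap ℂ (Matrix (Fin n) (Fin n) ℂ) μ - Ac).det = 0 := by
      by_contra hdet
      exact hnu ((Matrix.isUnit_iff_isUnit_det _).mpr (isUnit_iff_ne_zero.mpr hdet))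
    obtain ⟨w, hw0, hw⟩ := (Matrix.exists_mulVec_eq_zero_iff).mpr hdet0
    have heig : Ac *ᵥ w = μ • w := by
      rw [Matrix.sub_mulVec] at hw
      have h4 := sub_eq_zero.mp hw
      rw [← h4, Algebra.algebraMap_eq_smul_one, smul_mulVec, Matrix.one_mulVec]
    have htraj : ∀ t : ℝ, exp ((t : ℂ) • Ac) *ᵥ w = Complex.exp ((t : ℂ) * μ) • w := by
      intro t
      refine exp_mulVec_eigen ?_
      rw [smul_mulVec, heig, smul_smul]
    obtain ⟨i, hwi⟩ := Function.ne_iff.mp hw0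
    -- real and imaginary part trajectories
    have hpart : ∀ u : Fin n → ℝ,
        Tendsto (fun t : ℝ => (exp (t • J) *ᵥ u) i) atTop (𝓝 0) := by
      intro u
      have hHu := H ((WithLp.equiv 2 (Fin n → ℝ)).symm u)
      have hcontmap : Continuous fun y : EuclideanSpace ℝ (Fin n) =>
          (WithLp.equiv 2 (Fin n → ℝ)) y i :=
        (continuous_apply i).comp (PiLp.continuous_ofLp 2 (fun _ : Fin n => ℝ))
      have h7 := (hcontmap.tendsto 0).comp hHu
      simp only [Function.comp_def] at h7
      have h0 : (WithLp.equiv 2 (Fin n → ℝ)) (0 : EuclideanSpace ℝ (Fin n)) i = 0 := rfl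
      rw [h0] at h7
      refine h7.congr fun t => ?_
      rfl
    have hre_t := hpart (fun j => (w j).re)
    have him_t := hpart (fun j => (w j).im)
    -- combine into the complex trajectory
    have hcomb : Tendsto (fun t : ℝ => ((exp (t • J) *ᵥ fun j => (w j).re) i : ℂ) +
        Complex.I * ((exp (t • J) *ᵥ fun j => (w j).im) i : ℂ)) atTop (𝓝 0) := by
      have h5 := (Complex.continuous_ofReal.tendsto 0).comp hre_t
      have h6 := ((Complex.continuous_ofReal.tendsto 0).comp him_t).const_mul Complex.I
      simp only [Function.comp_def, Complex.ofReal_zero, mul_zero] at h5 h6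
      have := h5.add h6
      rwa [add_zero] at this
    have hsplit : ∀ t : ℝ, (exp ((t : ℂ) • Ac) *ᵥ w) i =
        ((exp (t • J) *ᵥ fun j => (w j).re) i : ℂ) +
          Complex.I * ((exp (t • J) *ᵥ fun j => (w j).im) i : ℂ) := by
      intro t
      rw [hAc, ← exp_map_ofReal]
      simp only [Matrix.mulVec, dotProduct, Matrix.map_apply]
      push_cast [Complex.ofReal_sum]
      rw [Finset.mul_sum, ← Finset.sum_add_distrib]
      refine Finset.sum_congr rfl fun j _ => ?_
      simp [Complex.ext_iff, Complex.mul_re, Complex.mul_im]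
    have hzero : Tendsto (fun t : ℝ => Complex.exp ((t : ℂ) * μ) * w i) atTop (𝓝 0) := by
      refine (hcomb.congr fun t => ?_)
      rw [← hsplit t, htraj t]
      simp [Pi.smul_apply, smul_eq_mul]
    have hnorm := hzero.norm
    rw [norm_zero] at hnorm
    have hpos : 0 < ‖w i‖ := norm_pos_iff.mpr hwi
    have hlt := hnorm.eventually_lt_const hpos
    obtain ⟨t, hlt, ht0⟩ := (hlt.and (eventually_ge_atTop (0 : ℝ))).exists
    have hnormeq : ‖Complex.exp ((t : ℂ) * μ) * w i‖ = Real.exp (t * μ.re) * ‖w i‖ := by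
      rw [norm_mul, Complex.norm_exp]
      congr 2
      simp [Complex.mul_re]
    rw [hnormeq] at hlt
    have hexp1 : (1 : ℝ) ≤ Real.exp (t * μ.re) :=
      Real.one_le_exp (mul_nonneg ht0 hre)
    nlinarith
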